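/- In D'_{n·2^q} with n odd (n > 1, q > 1), the conjugacy class of w consists of all elements u^s w with 0 ≤ s < n (n elements), and every element of the form u^s w^{2t+1} with 2t+1 odd of order 2^q lies in a conjugate of the cyclic subgroup ⟨w⟩. -/

import Mathlib

/-- Relations of the dicyclic-type group
`D'_{n·2^q} = ⟨u, w | uⁿ = w^{2^q} = 1, uwu = w⟩`,
with `u` the letter `0` and `w` the letter `1`. -/
def DprimeRels (n q : ℕ) : Set (FreeGroup (Fin 2)) :=
  { (FreeGroup.of 0) ^ n,
    (FreeGroup.of 1) ^ (2 ^ q),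
    (FreeGroup.of 0 * FreeGroup.of 1 * FreeGroup.of 0) * (FreeGroup.of 1)⁻¹ }

/-- The dicyclic-type group `D'_{n·2^q}`. -/
abbrev Dprime (n q : ℕ) := PresentedGroup (DprimeRels n q)

/-- The generator `u` of `D'_{n·2^q}`. -/
def Dprime.u (n q : ℕ) : Dprime n q := PresentedGroup.of 0

/-- The generator `w` of `D'_{n·2^q}`. -/
def Dprime.w (n q : ℕ) : Dprime n q := PresentedGroup.of 1

namespace DprimeAux

variable {G : Type*} [Group G] {u w : G} (hr : u * w * u = w)

include hr

lemma huw : u * w = w * u⁻¹ := eq_mul_inv_iff_mul_eq.mpr hr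

lemma hwu : w * u = u⁻¹ * w := by
  rw [show w * u = u⁻¹ * (u * w * u) by group, hr]

lemma conj_u : w * u * w⁻¹ = u⁻¹ := by rw [hwu hr]; group

lemma w_zpow_u (a : ℤ) : w * u ^ a * w⁻¹ = u ^ (-a) :=
  calc w * u ^ a * w⁻¹ = (w * u * w⁻¹) ^ a := by rw [conj_zpow]
    _ = (u⁻¹) ^ a := by rw [conj_u hr]
    _ = u ^ (-a) := by group

lemma w_u_comm (a : ℤ) : w * u ^ a = u ^ (-a) * w := by
  have h := w_zpow_u hr a
  rw [← h]; group

lemma winv_u_comm (a : ℤ) : w⁻¹ * u ^ a = u ^ (-a) * w⁻¹ := by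
  have h := w_u_comm hr (-a)
  rw [neg_neg] at h
  calc w⁻¹ * u ^ a = w⁻¹ * (u ^ a * w) * w⁻¹ := by group
    _ = w⁻¹ * (w * u ^ (-a)) * w⁻¹ := by rw [← h]
    _ = u ^ (-a) * w⁻¹ := by group

lemma swap (b c : ℤ) : ∃ e : ℤ, w ^ b * u ^ c = u ^ e * w ^ b := by
  induction b using Int.induction_on with
  | zero => exact ⟨c, by group⟩
  | succ b ih =>
      obtain ⟨e, he⟩ := ih
      refine ⟨-e, ?_⟩
      rw [show w ^ ((b : ℤ) + 1) * u ^ c = w * (w ^ (b:ℤ) * u ^ c) by group, he,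
        show w * (u ^ e * w ^ (b:ℤ)) = (w * u ^ e) * w ^ (b:ℤ) by group, w_u_comm hr]
      group
  | pred b ih =>
      obtain ⟨e, he⟩ := ih
      refine ⟨-e, ?_⟩
      rw [show w ^ (-(b : ℤ) - 1) * u ^ c = w⁻¹ * (w ^ (-(b:ℤ)) * u ^ c) by group, he,
        show w⁻¹ * (u ^ e * w ^ (-(b:ℤ))) = (w⁻¹ * u ^ e) * w ^ (-(b:ℤ)) by group,
        winv_u_comm hr]
      group

lemma odd_pow_u (t : ℕ) : w ^ (2 * t + 1) * u⁻¹ = u * w ^ (2 * t + 1) := by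
  induction t with
  | zero => simpa using (huw hr).symm
  | succ t ih =>
      have h2 : w ^ 2 * u = u * w ^ 2 := by
        calc w ^ 2 * u = w * (w * u) := by rw [pow_two, mul_assoc]
          _ = w * (u⁻¹ * w) := by rw [hwu hr]
          _ = (w * u⁻¹) * w := by group
          _ = (u * w) * w := by rw [← huw hr]
          _ = u * w ^ 2 := by rw [pow_two, mul_assoc]
      calc w ^ (2 * (t+1) + 1) * u⁻¹ = w ^ 2 * (w ^ (2*t+1) * u⁻¹) := by
            rw [show 2 * (t+1) + 1 = 2 + (2*t+1) by ring, pow_add]; group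
        _ = w ^ 2 * (u * w ^ (2*t+1)) := by rw [ih]
        _ = (w ^ 2 * u) * w ^ (2*t+1) := by group
        _ = (u * w ^ 2) * w ^ (2*t+1) := by rw [h2]
        _ = u * w ^ (2 * (t+1) + 1) := by
            rw [show 2 * (t+1) + 1 = 2 + (2*t+1) by ring, pow_add]; group

lemma conj_odd (j t : ℕ) :
    u ^ j * w ^ (2 * t + 1) * (u ^ j)⁻¹ = u ^ (2 * j) * w ^ (2 * t + 1) := by
  induction j with
  | zero => simp
  | succ j ih =>
      calc u ^ (j+1) * w ^ (2*t+1) * (u ^ (j+1))⁻¹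
          = u * (u ^ j * w ^ (2*t+1) * (u ^ j)⁻¹) * u⁻¹ := by
            rw [pow_succ']; group
        _ = u * (u ^ (2*j) * w ^ (2*t+1)) * u⁻¹ := by rw [ih]
        _ = u ^ (2*j) * u * (w ^ (2*t+1) * u⁻¹) := by group
        _ = u ^ (2*j) * u * (u * w ^ (2*t+1)) := by rw [odd_pow_u hr]
        _ = u ^ (2*(j+1)) * w ^ (2*t+1) := by
            rw [show 2*(j+1) = 2*j + 1 + 1 by ring, pow_succ, pow_succ]; group

end DprimeAux

namespace DprimeAux

variable {n q : ℕ}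

lemma mk_rel_one {r : FreeGroup (Fin 2)} (h : r ∈ DprimeRels n q) :
    PresentedGroup.mk (DprimeRels n q) r = 1 :=
  (QuotientGroup.eq_one_iff r).2 (Subgroup.subset_normalClosure h)

lemma hu : Dprime.u n q ^ n = 1 := by
  have h := mk_rel_one (n := n) (q := q) (r := (FreeGroup.of 0) ^ n) (by simp [DprimeRels])
  rw [map_pow] at h
  exact h

lemma hrel : Dprime.u n q * Dprime.w n q * Dprime.u n q = Dprime.w n q := by
  have h := mk_rel_one (n := n) (q := q)
    (r := (FreeGroup.of 0 * FreeGroup.of 1 * FreeGroup.of 0) * (FreeGroup.of 1)⁻¹)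
    (by simp [DprimeRels])
  rw [map_mul, map_mul, map_mul, map_inv] at h
  exact mul_inv_eq_one.mp h

lemma normal_form (g : Dprime n q) :
    ∃ a b : ℤ, g = Dprime.u n q ^ a * Dprime.w n q ^ b := by
  let H : Subgroup (Dprime n q) :=
    { carrier := {g | ∃ a b : ℤ, g = Dprime.u n q ^ a * Dprime.w n q ^ b}
      one_mem' := ⟨0, 0, by simp⟩
      mul_mem' := by
        rintro x y ⟨a, b, rfl⟩ ⟨c, d, rfl⟩
        obtain ⟨e, he⟩ := swap (hrel (n := n) (q := q)) b c
        refine ⟨a + e, b + d, ?_⟩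
        rw [zpow_add, zpow_add]
        simp only [mul_assoc]
        rw [← mul_assoc (Dprime.w n q ^ b), he, mul_assoc]
      inv_mem' := by
        rintro x ⟨a, b, rfl⟩
        obtain ⟨e, he⟩ := swap (hrel (n := n) (q := q)) (-b) (-a)
        exact ⟨e, -b, by rw [mul_inv_rev, ← zpow_neg, ← zpow_neg, he]⟩ }
  refine PresentedGroup.generated_by _ H (fun j => ?_) g
  fin_cases j
  · exact ⟨1, 0, by rw [zpow_one, zpow_zero, mul_one]; rfl⟩
  · exact ⟨0, 1, by rw [zpow_zero, zpow_one, one_mul]; rfl⟩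

end DprimeAux

/-- In `D'_{n·2^q}` with `n` odd, `n > 1`, `q > 1`: the conjugacy class of `w` is
`{u^s w | 0 ≤ s < n}`, and every element `u^s w^{2t+1}` (odd power of `w`) of order `2^q`
lies in a conjugate of the cyclic subgroup `⟨w⟩`. -/
theorem conjClass_w_Dprime (n q : ℕ) (hodd : Odd n) (hn : 1 < n) (hq : 1 < q) :
    ({x | IsConj (Dprime.w n q) x} =
        {x | ∃ s : ℕ, s < n ∧ x = Dprime.u n q ^ s * Dprime.w n q}) ∧
      ∀ s t : ℕ, orderOf (Dprime.u n q ^ s * Dprime.w n q ^ (2 * t + 1)) = 2 ^ q →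
        ∃ g : Dprime n q,
          g * (Dprime.u n q ^ s * Dprime.w n q ^ (2 * t + 1)) * g⁻¹ ∈
            Subgroup.zpowers (Dprime.w n q) := by
  set u := Dprime.u n q with hu_def
  set w := Dprime.w n q with hw_def
  have hrel : u * w * u = w := DprimeAux.hrel
  have hun : u ^ n = 1 := DprimeAux.hu
  obtain ⟨m, hm⟩ := hodd
  -- conjugation of u^j w u^{-j}
  have conj_one : ∀ j : ℕ, u ^ j * w * (u ^ j)⁻¹ = u ^ (2 * j) * w := by
    intro j
    have h := DprimeAux.conj_odd (hrel) j 0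
    simpa using h
  constructor
  · ext x
    simp only [Set.mem_setOf_eq]
    rw [isConj_iff]
    constructor
    · rintro ⟨c, rfl⟩
      obtain ⟨a, b, rfl⟩ := DprimeAux.normal_form c
      have hcomm : w ^ b * w = w * w ^ b := (Commute.zpow_self w b).eq
      have h1 : u ^ a * w ^ b * w * (u ^ a * w ^ b)⁻¹ = u ^ a * w * (u ^ a)⁻¹ :=
        calc u ^ a * w ^ b * w * (u ^ a * w ^ b)⁻¹
            = u ^ a * (w ^ b * w * (w ^ b)⁻¹) * (u ^ a)⁻¹ := by
              rw [mul_inv_rev]; simp only [mul_assoc]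
          _ = u ^ a * w * (u ^ a)⁻¹ := by
              rw [hcomm, mul_assoc w, mul_inv_cancel, mul_one]
      have h2 : u ^ a * w * (u ^ a)⁻¹ = u ^ (a + a) * w := by
        have hw := DprimeAux.w_u_comm (hrel) (-a)
        rw [neg_neg] at hw
        rw [← zpow_neg, mul_assoc, hw, zpow_add, mul_assoc]
      -- reduce exponent mod n
      have hn0 : (0 : ℤ) < (n : ℤ) := by omega
      set r : ℤ := (a + a) % (n : ℤ) with hr_def
      have hr0 : 0 ≤ r := Int.emod_nonneg _ (by omega)
      have hrn : r < (n : ℤ) := Int.emod_lt_of_pos _ hn0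
      have h3 : u ^ (a + a) = u ^ r := by
        have : a + a = (n : ℤ) * ((a + a) / (n : ℤ)) + r := (Int.mul_ediv_add_emod _ _).symm
        rw [this, zpow_add, zpow_mul, zpow_natCast, hun, one_zpow, one_mul]
      refine ⟨r.toNat, by omega, ?_⟩
      rw [h1, h2, h3, ← zpow_natCast u r.toNat, Int.toNat_of_nonneg hr0]
    · rintro ⟨s, hs, rfl⟩
      refine ⟨u ^ (s * (m + 1)), ?_⟩
      rw [conj_one]
      have : 2 * (s * (m + 1)) = s * n + s := by rw [hm]; ring
      rw [this, pow_add, pow_mul', hun, one_pow, one_mul]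
  · intro s t _
    refine ⟨u ^ (s * (m + 1) * (n - 1)), ?_⟩
    set j := s * (m + 1) * (n - 1) with hj
    have key : s + 2 * j = n * (n * s) := by
      have h1 : n - 1 = 2 * m := by omega
      rw [hj, h1, hm]; ring
    have step1 : u ^ j * (u ^ s * w ^ (2 * t + 1)) * (u ^ j)⁻¹
        = u ^ s * (u ^ j * w ^ (2 * t + 1) * (u ^ j)⁻¹) := by
      rw [← mul_assoc, ← mul_assoc, ← pow_add, add_comm j s, pow_add]
      simp only [mul_assoc]
    rw [step1, DprimeAux.conj_odd (hrel), ← mul_assoc, ← pow_add, key, pow_mul, hun,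
      one_pow, one_mul]
    exact Subgroup.npow_mem_zpowers _ _
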